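/- Let β = 0.53 and define the cubic polynomial B(t) = 8t(1 − t)·[(1 − 2√2/3)·t + √2/3 − 1/4]. Then for all real numbers x, y with 0 ≤ y ≤ 1 and 0 ≤ x ≤ y − B(y), one has (y − x) + (2^β − 1)·B(y) + B(x) ≥ 2·B((x + y)/2). -/
import Mathlib


/-- The cubic polynomial `B(t) = 8t(1−t)[(1 − 2√2/3)t + √2/3 − 1/4]`. -/
noncomputable def Bcubic (t : ℝ) : ℝ :=
  8 * (t * (1 - t)) * ((1 - 2 * Real.sqrt 2 / 3) * t + Real.sqrt 2 / 3 - 1 / 4)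

set_option maxHeartbeats 1600000 in
/-- for `β = 0.53`, `0 ≤ y ≤ 1` and `0 ≤ x ≤ y − B(y)`,
`(y−x) + (2^β − 1) B(y) + B(x) ≥ 2 B((x+y)/2)`. -/
theorem two_point_cubic_linear (x y : ℝ) (hy0 : 0 ≤ y) (hy1 : y ≤ 1)
    (hx0 : 0 ≤ x) (hx : x ≤ y - Bcubic y) :
    (y - x) + ((2 : ℝ) ^ (0.53 : ℝ) - 1) * Bcubic y + Bcubic x ≥
      2 * Bcubic ((x + y) / 2) := by
  simp only [Bcubic] at hx ⊢
  set s := Real.sqrt 2 with hsdef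
  have hs0 : (0:ℝ) ≤ s := Real.sqrt_nonneg 2
  have hs2 : s ^ 2 = 2 := Real.sq_sqrt (by norm_num)
  have hsl : (1.41421356:ℝ) ≤ s := by nlinarith
  have hsu : s ≤ (1.41421357:ℝ) := by nlinarith
  have hsl' : (0:ℝ) ≤ s - 1.41421356 := by linarith
  have hsu' : (0:ℝ) ≤ 1.41421357 - s := by linarith
  set C : ℝ := (2 : ℝ) ^ (0.53 : ℝ) - 1 with hCdef
  have hC : 0.443928 ≤ C := by
    have h100 : (1.443928:ℝ)^(100:ℕ) ≤ 2^(53:ℕ) := by norm_num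
    have : (1.443928:ℝ) ≤ (2:ℝ)^(0.53:ℝ) := by
      calc (1.443928:ℝ) = ((1.443928:ℝ)^(100:ℕ))^((1:ℝ)/100) := by
            rw [← Real.rpow_natCast (1.443928:ℝ), ← Real.rpow_mul (by norm_num)]; norm_num
        _ ≤ ((2:ℝ)^(53:ℕ))^((1:ℝ)/100) :=
            Real.rpow_le_rpow (by positivity) h100 (by norm_num)
        _ = (2:ℝ)^(0.53:ℝ) := by
            rw [← Real.rpow_natCast (2:ℝ), ← Real.rpow_mul (by norm_num)]; norm_num
    rw [hCdef]; linarith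
  have h1 : (0:ℝ) ≤ 1 - y := by linarith
  have hy2 : (0:ℝ) ≤ y * (1-y) := mul_nonneg hy0 h1
  have hB : (0:ℝ) ≤ 8*(y*(1-y))*((1-2*s/3)*y + s/3 - 1/4) := by
    nlinarith [mul_nonneg (mul_nonneg hy2 h1) hsl', mul_nonneg (mul_nonneg hy2 hy0) hsu',
      mul_nonneg (mul_nonneg hy2 hy0) hsl', mul_nonneg (mul_nonneg hy2 h1) hsu',
      mul_nonneg (mul_nonneg hy2 hy0) hy0, mul_nonneg (mul_nonneg hy2 h1) h1]
  have hW : (0:ℝ) ≤ (157764965929160090/13943550324832953 + (-368732723454161536/51126351191054161)*s)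
      + (-22504194651264/309094241423 + (529536079844608/10200109966959)*s)*y
      + (14054062504/20555579 + (-982458450896/2035002321)*s)*y^2
      + (-8549312/4101 + (199542272/135333)*s)*y^3
      + (1408 + (-8960/9)*s)*y^4 := by
    nlinarith [hy2, mul_nonneg hy2 hy0, mul_nonneg hy2 h1, mul_nonneg hy2 hy2,
      mul_nonneg (mul_nonneg hy2 hy0) hy0, mul_nonneg (mul_nonneg hy2 h1) h1,
      mul_nonneg hsl' hy0, mul_nonneg hsu' hy0,
      mul_nonneg (mul_nonneg hsl' hy0) hy0, mul_nonneg (mul_nonneg hsu' hy0) hy0,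
      mul_nonneg (mul_nonneg (mul_nonneg hsl' hy0) hy0) hy0,
      mul_nonneg (mul_nonneg (mul_nonneg hsu' hy0) hy0) hy0,
      mul_nonneg (mul_nonneg (mul_nonneg (mul_nonneg hsl' hy0) hy0) hy0) hy0,
      mul_nonneg (mul_nonneg (mul_nonneg (mul_nonneg hsu' hy0) hy0) hy0) hy0]
  have hRred : (0:ℝ) ≤ C + (-94/3 + (64/3)*s)*y + (1126/3 + (-2384/9)*s)*y^2
      + (-5296/3 + 1248*s)*y^3 + (11624/3 + (-24656/9)*s)*y^4
      + (-11584/3 + (8192/3)*s)*y^5 + (1408 + (-8960/9)*s)*y^6 := by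
    nlinarith [mul_nonneg (sq_nonneg (y - 9487/15037)) hW,
      mul_nonneg hsl' hy0, mul_nonneg hsu' hy0]
  have hphi : 0 ≤ C + (5 - 4*s + (8*s-12)*y) * (8*(y*(1-y))*((1-2*s/3)*y + s/3 - 1/4))
      + (6-4*s) * (8*(y*(1-y))*((1-2*s/3)*y + s/3 - 1/4))^2 := by
    have heq : C + (5 - 4*s + (8*s-12)*y) * (8*(y*(1-y))*((1-2*s/3)*y + s/3 - 1/4))
        + (6-4*s) * (8*(y*(1-y))*((1-2*s/3)*y + s/3 - 1/4))^2
        = C + (-94/3 + (64/3)*s)*y + (1126/3 + (-2384/9)*s)*y^2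
          + (-5296/3 + 1248*s)*y^3 + (11624/3 + (-24656/9)*s)*y^4
          + (-11584/3 + (8192/3)*s)*y^5 + (1408 + (-8960/9)*s)*y^6 := by
      linear_combination ((-32/3)*y + (416/3)*y^2 + (-256/9)*y^2*s + (-2048/3)*y^3
        + (512/3)*y^3*s + (4480/3)*y^4 + (-3328/9)*y^4*s + (-4352/3)*y^5
        + (1024/3)*y^5*s + 512*y^6 + (-1024/9)*y^6*s) * hs2
    rw [heq]; exact hRred
  have hpsi : 0 ≤ y + (6-4*s)*y^3 + (5 - 4*s + (8*s-12)*y)*y^2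
      + (C - 1) * (8*(y*(1-y))*((1-2*s/3)*y + s/3 - 1/4)) := by
    have hCC : (0:ℝ) ≤ C - 0.443928 := by linarith
    nlinarith [mul_nonneg hCC hB, hy2, mul_nonneg hy2 hy0,
      mul_nonneg hy2 h1, mul_nonneg hy2 hy2,
      mul_nonneg (mul_nonneg hy2 hy0) hsl', mul_nonneg (mul_nonneg hy2 hy0) hsu',
      mul_nonneg (mul_nonneg hy2 h1) hsl', mul_nonneg (mul_nonneg hy2 h1) hsu',
      mul_nonneg (mul_nonneg hy2 hy2) hsl', mul_nonneg (mul_nonneg hy2 hy2) hsu']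
  have hd : 0 ≤ y - x - 8*(y*(1-y))*((1-2*s/3)*y + s/3 - 1/4) := by linarith
  have hyB : 0 ≤ y - 8*(y*(1-y))*((1-2*s/3)*y + s/3 - 1/4) := by linarith
  have hslope : (6-4*s)*(y-x) + (5 - 4*s + (8*s-12)*y)
      + (6-4*s)*((8*(y*(1-y))*((1-2*s/3)*y + s/3 - 1/4)) + y) ≤ 0 := by
    have h64 : (0:ℝ) ≤ 6 - 4*s := by linarith
    nlinarith [mul_nonneg h64 hx0, mul_nonneg h64 hd, mul_nonneg h64 h1,
      mul_nonneg hsl' h1, mul_nonneg hsl' hy0]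
  have hprod : 0 ≤ (y - 8*(y*(1-y))*((1-2*s/3)*y + s/3 - 1/4)) *
      ((y - x) + C * (8*(y*(1-y))*((1-2*s/3)*y + s/3 - 1/4))
        + (8*(x*(1-x))*((1-2*s/3)*x + s/3 - 1/4))
        - 2 * (8*(((x+y)/2)*(1-(x+y)/2))*((1-2*s/3)*((x+y)/2) + s/3 - 1/4))) := by
    have hkey : (y - 8*(y*(1-y))*((1-2*s/3)*y + s/3 - 1/4)) *
        ((y - x) + C * (8*(y*(1-y))*((1-2*s/3)*y + s/3 - 1/4))
          + (8*(x*(1-x))*((1-2*s/3)*x + s/3 - 1/4))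
          - 2 * (8*(((x+y)/2)*(1-(x+y)/2))*((1-2*s/3)*((x+y)/2) + s/3 - 1/4)))
        = x * ((8*(y*(1-y))*((1-2*s/3)*y + s/3 - 1/4)) *
            (C + (5 - 4*s + (8*s-12)*y) * (8*(y*(1-y))*((1-2*s/3)*y + s/3 - 1/4))
              + (6-4*s) * (8*(y*(1-y))*((1-2*s/3)*y + s/3 - 1/4))^2))
          + (y - x - 8*(y*(1-y))*((1-2*s/3)*y + s/3 - 1/4)) *
            (y + (6-4*s)*y^3 + (5 - 4*s + (8*s-12)*y)*y^2
              + (C - 1) * (8*(y*(1-y))*((1-2*s/3)*y + s/3 - 1/4)))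
          + (y - 8*(y*(1-y))*((1-2*s/3)*y + s/3 - 1/4)) *
            (y - x - 8*(y*(1-y))*((1-2*s/3)*y + s/3 - 1/4)) * x *
            (-((6-4*s)*(y-x) + (5 - 4*s + (8*s-12)*y)
              + (6-4*s)*((8*(y*(1-y))*((1-2*s/3)*y + s/3 - 1/4)) + y))) := by
      ring
    rw [hkey]
    have t1 : 0 ≤ x * ((8*(y*(1-y))*((1-2*s/3)*y + s/3 - 1/4)) *
        (C + (5 - 4*s + (8*s-12)*y) * (8*(y*(1-y))*((1-2*s/3)*y + s/3 - 1/4))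
          + (6-4*s) * (8*(y*(1-y))*((1-2*s/3)*y + s/3 - 1/4))^2)) :=
      mul_nonneg hx0 (mul_nonneg hB hphi)
    have t2 : 0 ≤ (y - x - 8*(y*(1-y))*((1-2*s/3)*y + s/3 - 1/4)) *
        (y + (6-4*s)*y^3 + (5 - 4*s + (8*s-12)*y)*y^2
          + (C - 1) * (8*(y*(1-y))*((1-2*s/3)*y + s/3 - 1/4))) := mul_nonneg hd hpsi
    have t3 : 0 ≤ (y - 8*(y*(1-y))*((1-2*s/3)*y + s/3 - 1/4)) *
        (y - x - 8*(y*(1-y))*((1-2*s/3)*y + s/3 - 1/4)) * x *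
        (-((6-4*s)*(y-x) + (5 - 4*s + (8*s-12)*y)
          + (6-4*s)*((8*(y*(1-y))*((1-2*s/3)*y + s/3 - 1/4)) + y))) :=
      mul_nonneg (mul_nonneg (mul_nonneg hyB hd) hx0) (by linarith)
    linarith
  rcases eq_or_lt_of_le hyB with heq | hlt
  · have hxz : x = 0 := le_antisymm (by linarith) hx0
    subst hxz
    nlinarith [hpsi]
  · by_contra hcon
    push_neg at hcon
    nlinarith [hprod, mul_pos hlt (sub_pos.2 hcon)]
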